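/- Let K > 0 be a real number and let k ≥ 2 be an integer. Define, for 0 < t < π/√K, α(t) = (∫₀ᵗ (sin(√K·θ))^(k−1) dθ) / (sin(√K·t))^(k−1). Then α is a monotone increasing function of t on the interval (0, π/√K). -/

import Mathlib

open Real Set intervalIntegral

private lemma xcot_hasDeriv (x : ℝ) (hx : 0 < x) (hx' : x < Real.pi) :
    HasDerivAt (fun y => y * Real.cos y / Real.sin y)
      ((Real.sin x * Real.cos x - x) / (Real.sin x) ^ 2) x := by
  have hs : Real.sin x ≠ 0 := ne_of_gt (Real.sin_pos_of_pos_of_lt_pi hx hx')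
  have h1 : HasDerivAt (fun y : ℝ => y * Real.cos y)
      (1 * Real.cos x + x * (-Real.sin x)) x :=
    (hasDerivAt_id x).mul (Real.hasDerivAt_cos x)
  have h2 := h1.div (Real.hasDerivAt_sin x) hs
  refine h2.congr_deriv ?_
  congr 1
  linear_combination (-x) * Real.sin_sq_add_cos_sq x

private lemma xcot_anti : AntitoneOn (fun x => x * Real.cos x / Real.sin x)
    (Set.Ioo 0 Real.pi) := by
  have hint : interior (Set.Ioo (0:ℝ) Real.pi) = Set.Ioo 0 Real.pi := interior_Ioo
  apply antitoneOn_of_deriv_nonpos (convex_Ioo _ _)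
  · apply ContinuousOn.div (by fun_prop) (by fun_prop)
    exact fun x hx => ne_of_gt (Real.sin_pos_of_pos_of_lt_pi hx.1 hx.2)
  · rw [hint]
    exact fun x hx => (xcot_hasDeriv x hx.1 hx.2).differentiableAt.differentiableWithinAt
  · rw [hint]
    intro x hx
    rw [(xcot_hasDeriv x hx.1 hx.2).deriv]
    apply div_nonpos_of_nonpos_of_nonneg _ (sq_nonneg _)
    have h1 : Real.sin x ≤ x := le_of_lt (Real.sin_lt hx.1)
    have h2 : 0 ≤ Real.sin x := le_of_lt (Real.sin_pos_of_pos_of_lt_pi hx.1 hx.2)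
    nlinarith [Real.cos_le_one x]

private lemma phi_hasDeriv (u : ℝ) (c : ℝ) (hc : 0 < c) (hc' : c < Real.pi) :
    HasDerivAt (fun y => Real.sin (y * u) / Real.sin y)
      ((u * Real.cos (c * u) * Real.sin c - Real.sin (c * u) * Real.cos c) /
        (Real.sin c) ^ 2) c := by
  have hs : Real.sin c ≠ 0 := ne_of_gt (Real.sin_pos_of_pos_of_lt_pi hc hc')
  have h1 : HasDerivAt (fun y : ℝ => Real.sin (y * u)) (Real.cos (c * u) * (1 * u)) c :=
    by simpa [Function.comp_def] using
      (Real.hasDerivAt_sin (c * u)).comp c ((hasDerivAt_id c).mul_const u)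
  have h2 := h1.div (Real.hasDerivAt_sin c) hs
  refine h2.congr_deriv ?_
  ring

private lemma phi_mono (u : ℝ) (hu0 : 0 ≤ u) (hu1 : u ≤ 1) :
    MonotoneOn (fun y => Real.sin (y * u) / Real.sin y) (Set.Ioo 0 Real.pi) := by
  have hint : interior (Set.Ioo (0:ℝ) Real.pi) = Set.Ioo 0 Real.pi := interior_Ioo
  apply monotoneOn_of_deriv_nonneg (convex_Ioo _ _)
  · apply ContinuousOn.div (by fun_prop) (by fun_prop)
    exact fun x hx => ne_of_gt (Real.sin_pos_of_pos_of_lt_pi hx.1 hx.2)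
  · rw [hint]
    exact fun x hx => (phi_hasDeriv u x hx.1 hx.2).differentiableAt.differentiableWithinAt
  · rw [hint]
    intro c hc
    rw [(phi_hasDeriv u c hc.1 hc.2).deriv]
    apply div_nonneg _ (sq_nonneg _)
    rcases eq_or_lt_of_le hu0 with h | hu0'
    · simp [← h]
    · have hcu : 0 < c * u := mul_pos hc.1 hu0'
      have hcu' : c * u ≤ c := by nlinarith
      have hculpi : c * u < Real.pi := lt_of_le_of_lt hcu' hc.2
      have h := xcot_anti ⟨hcu, hculpi⟩ ⟨hc.1, hc.2⟩ hcu'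
      simp only at h
      rw [div_le_div_iff₀ (Real.sin_pos_of_pos_of_lt_pi hc.1 hc.2)
        (Real.sin_pos_of_pos_of_lt_pi hcu hculpi)] at h
      -- h : c * cos c * sin (c*u) ≤ c * u * cos (c*u) * sin c
      nlinarith [hc.1]

/-- For `0 < a ≤ b < π` and `u ∈ [0,1]`: `sin(a u)/sin a ≤ sin(b u)/sin b`. -/
private lemma key_div_le (a b u : ℝ) (ha : 0 < a) (hab : a ≤ b) (hb : b < Real.pi)
    (hu0 : 0 ≤ u) (hu1 : u ≤ 1) :
    Real.sin (a * u) / Real.sin a ≤ Real.sin (b * u) / Real.sin b :=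
  phi_mono u hu0 hu1 ⟨ha, lt_of_le_of_lt hab hb⟩ ⟨lt_of_lt_of_le ha hab, hb⟩ hab

/-- The function `α(t) = (∫₀ᵗ sin(√K θ)^(k-1) dθ) / sin(√K t)^(k-1)` is strictly
increasing on `(0, π/√K)` for `K > 0` and `k ≥ 2` (key analytic fact in the
proof of Theorem 2.0.2 of the paper). -/
theorem alpha_strict_mono (K : ℝ) (hK : 0 < K) (k : ℕ) (hk : 2 ≤ k) :
    StrictMonoOn
      (fun t => (∫ θ in (0:ℝ)..t, Real.sin (Real.sqrt K * θ) ^ (k - 1)) /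
        Real.sin (Real.sqrt K * t) ^ (k - 1))
      (Set.Ioo 0 (Real.pi / Real.sqrt K)) := by
  set c := Real.sqrt K with hcdef
  have hc : 0 < c := Real.sqrt_pos.mpr hK
  intro s hs t ht hst
  simp only
  -- basic bounds
  have hbpi : c * t < Real.pi := by
    rw [mul_comm]; exact (lt_div_iff₀ hc).mp ht.2
  have hapi : c * s < Real.pi := by
    rw [mul_comm]; exact (lt_div_iff₀ hc).mp hs.2
  have ha0 : 0 < c * s := mul_pos hc hs.1
  have hb0 : 0 < c * t := mul_pos hc ht.1
  have hsas : 0 < Real.sin (c * s) := Real.sin_pos_of_pos_of_lt_pi ha0 hapi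
  have hsat : 0 < Real.sin (c * t) := Real.sin_pos_of_pos_of_lt_pi hb0 hbpi
  -- substitution: α(r) = r * ∫₀¹ sin(c r u)^(k-1)/sin(c r)^(k-1) du
  have sub : ∀ r : ℝ, 0 < r →
      (∫ θ in (0:ℝ)..r, Real.sin (c * θ) ^ (k - 1)) / Real.sin (c * r) ^ (k - 1)
        = r * ∫ u in (0:ℝ)..1,
            Real.sin (c * (r * u)) ^ (k - 1) / Real.sin (c * r) ^ (k - 1) := by
    intro r hr
    have h := intervalIntegral.integral_comp_mul_left (a := (0:ℝ)) (b := 1)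
      (fun θ => Real.sin (c * θ) ^ (k - 1)) (ne_of_gt hr)
    simp only [mul_zero, mul_one, smul_eq_mul] at h
    rw [intervalIntegral.integral_div, h]
    field_simp
  rw [sub s hs.1, sub t ht.1]
  -- integrability
  have hcont : ∀ r : ℝ, 0 < Real.sin (c * r) → Continuous
      (fun u => Real.sin (c * (r * u)) ^ (k - 1) / Real.sin (c * r) ^ (k - 1)) := by
    intro r hrs
    apply Continuous.div (by fun_prop) continuous_const
    intro u
    positivity
  have hIs := ((hcont s hsas).intervalIntegrable (μ := MeasureTheory.volume) (0:ℝ) 1)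
  have hIt := ((hcont t hsat).intervalIntegrable (μ := MeasureTheory.volume) (0:ℝ) 1)
  -- pointwise comparison on [0,1]
  have hpt : ∀ u ∈ Set.Icc (0:ℝ) 1,
      Real.sin (c * (s * u)) ^ (k - 1) / Real.sin (c * s) ^ (k - 1)
        ≤ Real.sin (c * (t * u)) ^ (k - 1) / Real.sin (c * t) ^ (k - 1) := by
    intro u hu
    have h := key_div_le (c * s) (c * t) u ha0
      (le_of_lt (by exact mul_lt_mul_of_pos_left hst hc)) hbpi hu.1 hu.2
    have hs1 : Real.sin (c * s * u) = Real.sin (c * (s * u)) := by ring_nf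
    have ht1 : Real.sin (c * t * u) = Real.sin (c * (t * u)) := by ring_nf
    rw [hs1, ht1] at h
    have hnonneg : 0 ≤ Real.sin (c * (s * u)) / Real.sin (c * s) := by
      apply div_nonneg _ (le_of_lt hsas)
      apply Real.sin_nonneg_of_nonneg_of_le_pi
      · exact mul_nonneg hc.le (mul_nonneg hs.1.le hu.1)
      · nlinarith [hu.1, hu.2, ha0, hapi]
    calc Real.sin (c * (s * u)) ^ (k - 1) / Real.sin (c * s) ^ (k - 1)
        = (Real.sin (c * (s * u)) / Real.sin (c * s)) ^ (k - 1) := by rw [div_pow]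
      _ ≤ (Real.sin (c * (t * u)) / Real.sin (c * t)) ^ (k - 1) :=
          pow_le_pow_left₀ hnonneg h _
      _ = Real.sin (c * (t * u)) ^ (k - 1) / Real.sin (c * t) ^ (k - 1) := by rw [div_pow]
  have hPle : (∫ u in (0:ℝ)..1, Real.sin (c * (s * u)) ^ (k - 1) / Real.sin (c * s) ^ (k - 1))
      ≤ ∫ u in (0:ℝ)..1, Real.sin (c * (t * u)) ^ (k - 1) / Real.sin (c * t) ^ (k - 1) :=
    intervalIntegral.integral_mono_on (by norm_num) hIs hIt hpt
  have hPpos : 0 < ∫ u in (0:ℝ)..1,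
      Real.sin (c * (t * u)) ^ (k - 1) / Real.sin (c * t) ^ (k - 1) := by
    apply intervalIntegral.intervalIntegral_pos_of_pos_on hIt _ (by norm_num)
    intro u hu
    have h1 : 0 < c * (t * u) := mul_pos hc (mul_pos ht.1 hu.1)
    have h2 : c * (t * u) < Real.pi := by nlinarith [hu.2, hb0, hbpi]
    have := Real.sin_pos_of_pos_of_lt_pi h1 h2
    positivity
  calc s * ∫ u in (0:ℝ)..1, Real.sin (c * (s * u)) ^ (k - 1) / Real.sin (c * s) ^ (k - 1)
      ≤ s * ∫ u in (0:ℝ)..1, Real.sin (c * (t * u)) ^ (k - 1) / Real.sin (c * t) ^ (k - 1) :=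
        mul_le_mul_of_nonneg_left hPle (le_of_lt hs.1)
    _ < t * ∫ u in (0:ℝ)..1, Real.sin (c * (t * u)) ^ (k - 1) / Real.sin (c * t) ^ (k - 1) :=
        mul_lt_mul_of_pos_right hst hPpos
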